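/- Let v be a vertex set of n ≥ 2 cyclically ordered points, and let A_{k,n} denote the number of partitions of {1,...,n} into exactly k nonempty blocks such that no block contains two cyclically consecutive integers (where n and 1 are consecutive). Then for every prime power q, q(q+1) · Σ_{k=2}^{n} A_{k,n} · Π_{j=1}^{k-2}(q-j) = q^n + (-1)^n q. -/

import Mathlib

open Finset

/-- The cyclic successor of `i : Fin n`. -/
def cycSucc {n : ℕ} (i : Fin n) : Fin n := ⟨(i.1 + 1) % n, Nat.mod_lt _ i.pos⟩

/-- `cyclicPartitionCount k n` is the number `A_{k,n}` of partitions of the cyclically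
ordered set `{1,…,n}` into exactly `k` nonempty blocks such that no block contains two
cyclically consecutive elements. -/
noncomputable def cyclicPartitionCount (k n : ℕ) : ℕ :=
  Nat.card {P : Finpartition (Finset.univ : Finset (Fin n)) //
    P.parts.card = k ∧ ∀ b ∈ P.parts, ∀ i : Fin n, i ∈ b → cycSucc i ∉ b}

/-! ### Basic facts about `cycSucc` -/

lemma cycSucc_eq_add_one {n : ℕ} [NeZero n] (i : Fin n) : cycSucc i = i + 1 := by
  rcases n with _ | m
  · exact absurd rfl (NeZero.ne 0)
  · apply Fin.ext
    simp [cycSucc, Fin.add_def, Nat.add_mod]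

/-! ### Proper colorings and proper partitions -/

/-- Proper colorings of the cycle. -/
def ProperCol (n : ℕ) (X : Type) : Type := {f : Fin n → X // ∀ i, f i ≠ f (cycSucc i)}

/-- Proper partitions of the cycle. -/
def PP (n : ℕ) : Type :=
  {P : Finpartition (Finset.univ : Finset (Fin n)) //
    ∀ b ∈ P.parts, ∀ i : Fin n, i ∈ b → cycSucc i ∉ b}

section ClaimA

variable {n : ℕ} {X : Type} [Fintype X] [DecidableEq X]

open Finpartition

noncomputable instance : Fintype (PP n) := by unfold PP; exact Subtype.fintype _
noncomputable instance : Fintype (ProperCol n X) := by unfold ProperCol; exact Subtype.fintype _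

/-- From a proper partition and an injection of its parts into colors, a proper coloring. -/
noncomputable def colOf (P : PP n) (e : ↥P.1.parts ↪ X) : ProperCol n X :=
  ⟨fun i => e ⟨P.1.part i, P.1.part_mem.mpr (mem_univ i)⟩, by
    intro i h
    have h3 : P.1.part i = P.1.part (cycSucc i) := congrArg Subtype.val (e.injective h)
    exact P.2 _ (P.1.part_mem.mpr (mem_univ i)) i (P.1.mem_part (mem_univ i))
      (h3 ▸ P.1.mem_part (mem_univ (cycSucc i)))⟩

lemma part_colOf (P : PP n) (e : ↥P.1.parts ↪ X) (i : Fin n) :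
    P.1.part i = univ.filter (fun j => (colOf P e).1 j = (colOf P e).1 i) := by
  ext j
  simp only [mem_filter, mem_univ, true_and]
  rw [P.1.mem_part_iff_part_eq_part (mem_univ j) (mem_univ i)]
  constructor
  · intro h
    show e ⟨P.1.part j, _⟩ = e ⟨P.1.part i, _⟩
    congr 1
    exact Subtype.ext h
  · intro h
    exact congrArg Subtype.val (e.injective h)

lemma colOf_bijective :
    Function.Bijective (fun p : Σ P : PP n, (↥P.1.parts ↪ X) => colOf p.1 p.2) := by
  constructor
  · rintro ⟨P, e⟩ ⟨P', e'⟩ hfe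
    have hpart : ∀ i, P.1.part i = P'.1.part i := by
      intro i
      simp only at hfe
      rw [part_colOf P e i, part_colOf P' e' i, hfe]
    have hP : P = P' := by
      apply Subtype.ext
      apply Finpartition.ext
      ext b
      constructor
      · intro hb
        obtain ⟨i, hi⟩ := P.1.nonempty_of_mem_parts hb
        rw [← P.1.part_eq_of_mem hb hi, hpart]
        exact P'.1.part_mem.mpr (mem_univ i)
      · intro hb
        obtain ⟨i, hi⟩ := P'.1.nonempty_of_mem_parts hb
        rw [← P'.1.part_eq_of_mem hb hi, ← hpart]
        exact P.1.part_mem.mpr (mem_univ i)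
    subst hP
    have he : e = e' := by
      ext b
      obtain ⟨i, hi⟩ := P.1.nonempty_of_mem_parts b.2
      have h1 : b = ⟨P.1.part i, P.1.part_mem.mpr (mem_univ i)⟩ :=
        Subtype.ext (P.1.part_eq_of_mem b.2 hi).symm
      rw [h1]
      exact congrFun (congrArg Subtype.val hfe) i
    rw [he]
  · rintro ⟨f, hf⟩
    classical
    letI : DecidableRel ⇑(Setoid.ker f) := fun a b => Classical.dec _
    set P0 : Finpartition (univ : Finset (Fin n)) := Finpartition.ofSetoid (Setoid.ker f) with hP0
    have hmem : ∀ i j : Fin n, j ∈ P0.part i ↔ f i = f j := by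
      intro i j
      rw [hP0, Finpartition.mem_part_ofSetoid_iff_rel, Setoid.ker_def]
    have hproper : ∀ b ∈ P0.parts, ∀ i : Fin n, i ∈ b → cycSucc i ∉ b := by
      intro b hb i hi hci
      have h1 : P0.part i = b := P0.part_eq_of_mem hb hi
      exact hf i ((hmem i (cycSucc i)).mp (h1 ▸ hci))
    refine ⟨⟨⟨P0, hproper⟩, ⟨fun b => f (P0.nonempty_of_mem_parts b.2).choose, ?_⟩⟩, ?_⟩
    · intro b b' hbb'
      have hcb := (P0.nonempty_of_mem_parts b.2).choose_spec
      have hcb' := (P0.nonempty_of_mem_parts b'.2).choose_spec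
      have h1 : (P0.nonempty_of_mem_parts b'.2).choose ∈
          P0.part (P0.nonempty_of_mem_parts b.2).choose := (hmem _ _).mpr hbb'
      apply Subtype.ext
      rw [← P0.part_eq_of_mem b.2 hcb, ← P0.part_eq_of_mem b'.2 hcb']
      exact P0.eq_of_mem_parts (P0.part_mem.mpr (mem_univ _)) (P0.part_mem.mpr (mem_univ _)) h1
        (P0.mem_part (mem_univ _))
    · apply Subtype.ext
      funext i
      exact ((hmem i _).mp (P0.nonempty_of_mem_parts (P0.part_mem.mpr (mem_univ i))).choose_spec).symm

lemma card_parts_mem_Icc (hn : 2 ≤ n) (P : PP n) : P.1.parts.card ∈ Icc 2 n := by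
  haveI : NeZero n := ⟨by omega⟩
  rw [mem_Icc]
  constructor
  · rw [show (2:ℕ) = 1 + 1 by rfl, Nat.add_one_le_iff, Finset.one_lt_card]
    have h0 : (0 : Fin n) ∈ (univ : Finset (Fin n)) := mem_univ _
    refine ⟨P.1.part 0, P.1.part_mem.mpr h0, P.1.part (cycSucc 0), P.1.part_mem.mpr (mem_univ _), ?_⟩
    intro heq
    exact P.2 _ (P.1.part_mem.mpr h0) 0 (P.1.mem_part h0)
      (heq ▸ P.1.mem_part (mem_univ (cycSucc 0)))
  · simpa using P.1.card_parts_le_card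

theorem claimA (hn : 2 ≤ n) :
    Nat.card (ProperCol n X)
      = ∑ k ∈ Icc 2 n, cyclicPartitionCount k n * (Fintype.card X).descFactorial k := by
  classical
  have hA : ∀ k, cyclicPartitionCount k n
      = #(univ.filter (fun P : PP n => P.1.parts.card = k)) := by
    intro k
    have E : {P : Finpartition (Finset.univ : Finset (Fin n)) //
        P.parts.card = k ∧ ∀ b ∈ P.parts, ∀ i : Fin n, i ∈ b → cycSucc i ∉ b}
        ≃ {Q : PP n // Q.1.parts.card = k} :=
      { toFun := fun P => ⟨⟨P.1, P.2.2⟩, P.2.1⟩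
        invFun := fun Q => ⟨Q.1.1, Q.2, Q.1.2⟩
        left_inv := fun _ => rfl
        right_inv := fun _ => rfl }
    rw [cyclicPartitionCount, Nat.card_congr E, Nat.card_eq_fintype_card, Fintype.card_subtype]
  rw [Nat.card_eq_fintype_card,
    ← Fintype.card_congr (Equiv.ofBijective _ (colOf_bijective (n := n) (X := X))),
    Fintype.card_sigma]
  have h1 : ∀ P : PP n, Fintype.card (↥P.1.parts ↪ X)
      = (Fintype.card X).descFactorial P.1.parts.card := by
    intro P; rw [Fintype.card_embedding_eq, Fintype.card_coe]
  simp_rw [h1]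
  rw [Finset.sum_comp (fun k => (Fintype.card X).descFactorial k)
    (fun P : PP n => P.1.parts.card)]
  have hsub : (univ : Finset (PP n)).image (fun P => P.1.parts.card) ⊆ Icc 2 n := by
    intro k hk
    obtain ⟨P, _, rfl⟩ := mem_image.mp hk
    exact card_parts_mem_Icc hn P
  rw [Finset.sum_subset hsub ?hz]
  · refine Finset.sum_congr rfl fun k _ => ?_
    rw [hA k, smul_eq_mul]
  case hz =>
    intro k _ hk
    have hemp : filter (fun P : PP n => P.1.parts.card = k) univ = ∅ := by
      rw [filter_eq_empty_iff]
      intro P _ h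
      exact hk (mem_image.mpr ⟨P, mem_univ _, h⟩)
    rw [hemp]
    simp

end ClaimA

section ClaimB

variable {x : ℕ} [NeZero x]

/-- `NN x m` counts sequences of `m` nonzero elements of `ZMod x` summing to `0`. -/
noncomputable def NN (x m : ℕ) : ℕ :=
  Nat.card {g : Fin m → ZMod x // (∀ i, g i ≠ 0) ∧ ∑ i, g i = 0}

lemma card_nonzero_fun (m : ℕ) :
    Nat.card {h : Fin m → ZMod x // ∀ i, h i ≠ 0} = (x - 1) ^ m := by
  rw [Nat.card_congr (Equiv.subtypePiEquivPi (p := fun (_ : Fin m) (b : ZMod x) => b ≠ 0)),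
    Nat.card_pi]
  have h1 : Nat.card {b : ZMod x // b ≠ 0} = x - 1 := by
    rw [Nat.card_eq_fintype_card]
    have h2 := Fintype.card_subtype_compl (fun b : ZMod x => b = 0)
    rw [ZMod.card, Fintype.card_subtype_eq] at h2
    exact h2
  simp only [h1]
  rw [Finset.prod_const, Finset.card_univ, Fintype.card_fin]

lemma card_split (m : ℕ) :
    Nat.card {g : Fin m → ZMod x // (∀ i, g i ≠ 0) ∧ ∑ i, g i = 0}
      + Nat.card {g : Fin m → ZMod x // (∀ i, g i ≠ 0) ∧ ∑ i, g i ≠ 0}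
      = (x - 1) ^ m := by
  classical
  rw [← card_nonzero_fun (x := x) m, Nat.card_eq_fintype_card, Nat.card_eq_fintype_card,
    Nat.card_eq_fintype_card, Fintype.card_subtype, Fintype.card_subtype,
    Fintype.card_subtype, ← Finset.filter_filter, ← Finset.filter_filter,
    Finset.card_filter_add_card_filter_not]

/-- Dropping the last entry gives a bijection between zero-sum nonzero sequences of length
`m+1` and nonzero sequences of length `m` with nonzero sum. -/
def TsuccEquiv (m : ℕ) :
    {g : Fin (m+1) → ZMod x // (∀ i, g i ≠ 0) ∧ ∑ i, g i = 0}
      ≃ {h : Fin m → ZMod x // (∀ i, h i ≠ 0) ∧ ∑ i, h i ≠ 0} where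
  toFun g := ⟨Fin.init g.1, fun i => g.2.1 _, by
    have hs := g.2.2
    rw [Fin.sum_univ_castSucc] at hs
    intro h0
    have : (Fin.init g.1) = fun i => g.1 i.castSucc := rfl
    rw [this] at h0
    rw [h0, zero_add] at hs
    exact g.2.1 _ hs⟩
  invFun h := ⟨Fin.snoc h.1 (-∑ i, h.1 i), by
    intro i
    induction i using Fin.lastCases with
    | last => rw [Fin.snoc_last]; exact neg_ne_zero.mpr h.2.2
    | cast i => rw [Fin.snoc_castSucc]; exact h.2.1 i, by
    rw [Fin.sum_univ_castSucc]
    simp only [Fin.snoc_castSucc, Fin.snoc_last]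
    rw [add_neg_cancel]⟩
  left_inv g := by
    apply Subtype.ext
    have hlast : -∑ i, Fin.init g.1 i = g.1 (Fin.last m) := by
      have hs := g.2.2
      rw [Fin.sum_univ_castSucc] at hs
      have : (Fin.init g.1) = fun i => g.1 i.castSucc := rfl
      rw [this]
      linear_combination -hs
    show Fin.snoc (Fin.init g.1) _ = g.1
    rw [hlast, Fin.snoc_init_self]
  right_inv h := by
    apply Subtype.ext
    show Fin.init (α := fun _ => ZMod x) (Fin.snoc h.1 (-∑ i, h.1 i)) = h.1
    exact Fin.init_snoc _ _

lemma NN_one : NN x 1 = 0 := by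
  haveI : IsEmpty {g : Fin 1 → ZMod x // (∀ i, g i ≠ 0) ∧ ∑ i, g i = 0} := by
    constructor
    rintro ⟨g, h1, h2⟩
    rw [Fin.sum_univ_one] at h2
    exact h1 0 h2
  rw [NN, Nat.card_of_isEmpty]

lemma NN_rec (m : ℕ) : NN x (m + 1) + NN x m = (x - 1) ^ m := by
  classical
  rw [NN, NN, Nat.card_congr (TsuccEquiv (x := x) m), add_comm]
  exact card_split m

lemma NN_formula (m : ℕ) (hm : 1 ≤ m) :
    (x : ℤ) * NN x m = ((x : ℤ) - 1) ^ m + (-1) ^ m * ((x : ℤ) - 1) := by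
  induction m, hm using Nat.le_induction with
  | base => rw [NN_one]; ring
  | succ m hm ih =>
    have hx : 1 ≤ x := Nat.one_le_iff_ne_zero.mpr (NeZero.ne x)
    have hcast : (NN x (m + 1) : ℤ) + NN x m = ((x : ℤ) - 1) ^ m := by
      have h := congrArg (Nat.cast : ℕ → ℤ) (NN_rec (x := x) m)
      push_cast [Nat.cast_sub hx] at h
      exact h
    linear_combination (x : ℤ) * hcast - ih

lemma properCol_card (n : ℕ) (hn : 1 ≤ n) :
    Nat.card (ProperCol n (ZMod x)) = x * NN x n := by
  haveI : NeZero n := ⟨by omega⟩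
  classical
  set φ : ProperCol n (ZMod x)
      → ZMod x × {g : Fin n → ZMod x // (∀ i, g i ≠ 0) ∧ ∑ i, g i = 0} :=
    fun f => (f.1 0, ⟨fun i => f.1 (cycSucc i) - f.1 i,
      fun i => sub_ne_zero.mpr (Ne.symm (f.2 i)), by
        simp_rw [cycSucc_eq_add_one]
        rw [Finset.sum_sub_distrib]
        rw [Fintype.sum_equiv (Equiv.addRight (1 : Fin n))
          (fun i => f.1 (i + 1)) f.1 (fun i => rfl)]
        exact sub_self _⟩) with hφ
  have hbij : Function.Bijective φ := by
    constructor
    · rintro f f' hff'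
      have h0 : f.1 0 = f'.1 0 := congrArg Prod.fst hff'
      have hdiff : ∀ i, f.1 (cycSucc i) - f.1 i = f'.1 (cycSucc i) - f'.1 i :=
        fun i => congrFun (congrArg Subtype.val (congrArg Prod.snd hff')) i
      have key : ∀ m, ∀ hm : m < n, f.1 ⟨m, hm⟩ = f'.1 ⟨m, hm⟩ := by
        intro m
        induction m with
        | zero =>
          intro hm
          have h00 : (⟨0, hm⟩ : Fin n) = 0 := Fin.ext (by simp)
          rw [h00]; exact h0
        | succ m ih =>
          intro hm
          have hm' : m < n := Nat.lt_of_succ_lt hm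
          have hc : cycSucc ⟨m, hm'⟩ = ⟨m + 1, hm⟩ :=
            Fin.ext (by simp [cycSucc, Nat.mod_eq_of_lt hm])
          have hd := hdiff ⟨m, hm'⟩
          rw [hc] at hd
          have h2 : f.1 ⟨m + 1, hm⟩ - f.1 ⟨m, hm'⟩ = f'.1 ⟨m + 1, hm⟩ - f.1 ⟨m, hm'⟩ := by
            rw [hd, ih hm']
          exact sub_left_inj.mp h2
      apply Subtype.ext
      funext i
      have := key i.1 i.2
      simpa using this
    · rintro ⟨a, g, hg1, hg2⟩
      set F : Fin n → ZMod x :=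
        fun i => a + ∑ j ∈ univ.filter (fun j : Fin n => j.1 < i.1), g j with hF
      have hF0 : F 0 = a := by
        have : univ.filter (fun j : Fin n => j.1 < (0 : Fin n).1) = ∅ := by
          rw [filter_eq_empty_iff]; intro j _; simp
        rw [hF]; simp only [this, Finset.sum_empty, add_zero]
      have hdiff : ∀ i, F (cycSucc i) - F i = g i := by
        intro i
        rcases lt_or_eq_of_le (Nat.succ_le_of_lt i.2) with h | h
        · have hc : cycSucc i = ⟨i.1 + 1, h⟩ := Fin.ext (by simp [cycSucc, Nat.mod_eq_of_lt h])
          have hins : univ.filter (fun j : Fin n => j.1 < i.1 + 1)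
              = insert i (univ.filter (fun j : Fin n => j.1 < i.1)) := by
            ext j
            simp only [mem_filter, mem_univ, true_and, mem_insert, Nat.lt_succ_iff_lt_or_eq]
            rw [Fin.ext_iff]
            tauto
          rw [hc, hF]
          simp only []
          rw [hins, Finset.sum_insert (by simp)]
          ring
        · have hc : cycSucc i = 0 := Fin.ext (by
            simp only [cycSucc]
            rw [show i.1 + 1 = n from h, Nat.mod_self]
            simp)
          have h2 : univ.filter (fun j : Fin n => j.1 < i.1) = univ.erase i := by
            ext j
            simp only [mem_filter, mem_univ, true_and, mem_erase, and_true]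
            rw [Ne, Fin.ext_iff]
            have := j.2
            omega
          rw [hc, hF0,
            show F i = a + ∑ j ∈ univ.filter (fun j : Fin n => j.1 < i.1), g j from rfl,
            h2, Finset.sum_erase_eq_sub (mem_univ i), hg2]
          ring
      refine ⟨⟨F, ?_⟩, ?_⟩
      · intro i heq
        exact hg1 i (by rw [← hdiff i, ← heq, sub_self])
      · rw [hφ]
        refine Prod.ext hF0 (Subtype.ext (funext fun i => hdiff i))
  rw [Nat.card_congr (Equiv.ofBijective φ hbij), Nat.card_prod, Nat.card_zmod, NN]

lemma claimB (n : ℕ) (hn : 1 ≤ n) :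
    (Nat.card (ProperCol n (ZMod x)) : ℤ)
      = ((x : ℤ) - 1) ^ n + (-1) ^ n * ((x : ℤ) - 1) := by
  rw [properCol_card n hn, Nat.cast_mul]
  exact NN_formula n hn

end ClaimB

lemma descFac_cast (q : ℕ) {k : ℕ} (hk : 2 ≤ k) :
    (((q + 1).descFactorial k : ℤ))
      = ((q : ℤ) + 1) * q * ∏ j ∈ Icc 1 (k - 2), ((q : ℤ) - j) := by
  induction k, hk using Nat.le_induction with
  | base =>
    rw [show Finset.Icc 1 (2 - 2) = ∅ from Finset.Icc_eq_empty (by omega), Finset.prod_empty,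
      mul_one]
    have h2 : (q + 1).descFactorial 2 = (q + 1) * q := by
      simp [Nat.descFactorial, Nat.mul_comm]
    rw [h2]
    push_cast
    ring
  | succ k hk ih =>
    rw [Nat.descFactorial_succ, show k + 1 - 2 = (k - 2) + 1 from by omega,
      Finset.prod_Icc_succ_top (by omega)]
    rcases le_or_gt k (q + 1) with h | h
    · have hsub : ((q + 1 - k : ℕ) : ℤ) = (q : ℤ) + 1 - k := by
        rw [Nat.cast_sub h]; push_cast; ring
      have hc2 : ((k - 2 : ℕ) : ℤ) = (k : ℤ) - 2 := by
        rw [Nat.cast_sub hk]; norm_num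
      rw [Nat.cast_mul, hsub, ih]
      push_cast [hc2]
      ring
    · have h0 : (q + 1).descFactorial k = 0 := Nat.descFactorial_eq_zero_iff_lt.mpr h
      have hihz : ((q : ℤ) + 1) * q * ∏ j ∈ Icc 1 (k - 2), ((q : ℤ) - j) = 0 := by
        rw [← ih, h0, Nat.cast_zero]
      rw [h0, mul_zero, Nat.cast_zero, ← mul_assoc, hihz, zero_mul]

theorem sum_cyclicPartitionCount_eq (n : ℕ) (hn : 2 ≤ n) (q : ℕ) (hq : IsPrimePow q) :
    (q : ℤ) * (q + 1) *
        ∑ k ∈ Icc 2 n, (cyclicPartitionCount k n : ℤ) * ∏ j ∈ Icc 1 (k - 2), ((q : ℤ) - j) =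
      (q : ℤ) ^ n + (-1) ^ n * q := by
  haveI : NeZero (q + 1) := ⟨Nat.succ_ne_zero q⟩
  have hB := claimB (x := q + 1) n (by omega)
  have hA := claimA (n := n) (X := ZMod (q + 1)) hn
  rw [ZMod.card] at hA
  rw [Finset.mul_sum]
  have hterm : ∀ k ∈ Icc 2 n,
      (q : ℤ) * (q + 1) * ((cyclicPartitionCount k n : ℤ) * ∏ j ∈ Icc 1 (k - 2), ((q : ℤ) - j))
        = (cyclicPartitionCount k n : ℤ) * ((q + 1).descFactorial k : ℤ) := by
    intro k hk
    rw [descFac_cast q (mem_Icc.mp hk).1]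
    ring
  rw [Finset.sum_congr rfl hterm]
  have hcast : (∑ k ∈ Icc 2 n, (cyclicPartitionCount k n : ℤ) * ((q + 1).descFactorial k : ℤ))
      = ((Nat.card (ProperCol n (ZMod (q + 1))) : ℤ)) := by
    rw [hA]
    push_cast
    rfl
  rw [hcast, hB]
  push_cast
  ring
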